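/- Let M be a spanning Δ-divisible multiset of points in PG(k-1,q) with k ≥ 2, and let Q be a point. Define the projection M_Q on PG(k-2,q) by M_Q(L/Q) = M(L) - M(Q) for every line L through Q. Then M_Q is Δ-divisible, has cardinality |M| - M(Q), its span has dimension k-1, and its maximum point multiplicity equals max over lines L through Q of (M(L) - M(Q)). -/
import Mathlib

open scoped Classical

noncomputable def MVal {F V : Type*} [Field F] [AddCommGroup V] [Module F V]
    (M : Projectivization F V → ℕ) (K : Submodule F V) : ℕ :=
  ∑ᶠ P ∈ {P : Projectivization F V | P.submodule ≤ K}, M P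

def IsDivisible {F V : Type*} [Field F] [AddCommGroup V] [Module F V] (Δ : ℕ)
    (M : Projectivization F V → ℕ) : Prop :=
  ∀ H : Submodule F V, Module.finrank F H + 1 = Module.finrank F V →
    MVal M H ≡ MVal M ⊤ [MOD Δ]

def IsSpanning {F V : Type*} [Field F] [AddCommGroup V] [Module F V]
    (M : Projectivization F V → ℕ) : Prop :=
  (⨆ P ∈ {P : Projectivization F V | 0 < M P}, P.submodule) = ⊤

def gaussNum (q k : ℕ) : ℕ := ∑ i ∈ Finset.range k, q ^ i

def IsProjBase {F V : Type*} [Field F] [AddCommGroup V] [Module F V]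
    (n : ℕ) (B : Finset (Projectivization F V)) : Prop :=
  B.card = n ∧ ∀ T ⊆ B, T.card = n - 1 →
    Module.finrank F ((⨆ P ∈ T, Projectivization.submodule P) : Submodule F V) = n - 1

section Aux22259

open Projectivization Submodule Module
open scoped LinearAlgebra.Projectivization

lemma MVal_eq_sum22259 {F V : Type*} [Field F] [AddCommGroup V] [Module F V]
    [Fintype (ℙ F V)] (M : ℙ F V → ℕ) (K : Submodule F V) :
    MVal M K = ∑ P ∈ Finset.univ.filter (fun P : ℙ F V => P.submodule ≤ K), M P := by
  rw [MVal, ← finsum_mem_coe_finset]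
  congr 1
  ext P
  simp

lemma aux_finrank22259 {F V : Type*} [Field F] [AddCommGroup V] [Module F V]
    [FiniteDimensional F V] (Q : ℙ F V) (K : Submodule F V) (h : Q.submodule ≤ K) :
    finrank F (Submodule.map Q.submodule.mkQ K) + 1 = finrank F K := by
  set f : K →ₗ[F] (V ⧸ Q.submodule) := Q.submodule.mkQ ∘ₗ K.subtype with hf
  have hrange : LinearMap.range f = Submodule.map Q.submodule.mkQ K := by
    rw [hf, LinearMap.range_comp, Submodule.range_subtype]
  have hker : LinearMap.ker f = Submodule.comap K.subtype Q.submodule := by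
    rw [hf, LinearMap.ker_comp, Submodule.ker_mkQ]
  have h1 := LinearMap.finrank_range_add_finrank_ker f
  have h2 : finrank F (LinearMap.ker f) = 1 := by
    rw [hker, (Submodule.comapSubtypeEquivOfLe h).finrank_eq, Q.finrank_submodule]
  rw [hrange, h2] at h1
  exact h1

end Aux22259

open Projectivization Submodule Module in
theorem stmt_18 {F : Type*} [Field F] [Fintype F] (k Δ : ℕ) (hk : 2 ≤ k)
    (M : Projectivization F (Fin k → F) → ℕ)
    (hspan : IsSpanning M) (hdiv : IsDivisible Δ M)
    (Q : Projectivization F (Fin k → F))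
    (N : Projectivization F ((Fin k → F) ⧸ Q.submodule) → ℕ)
    (hN : ∀ (L : Submodule F (Fin k → F))
        (P' : Projectivization F ((Fin k → F) ⧸ Q.submodule)),
      Q.submodule ≤ L → Module.finrank F L = 2 →
      Submodule.map Q.submodule.mkQ L = P'.submodule →
      N P' = MVal M L - M Q) :
    IsDivisible Δ N ∧
    MVal N ⊤ = MVal M ⊤ - M Q ∧
    IsSpanning N ∧
    Module.finrank F ((Fin k → F) ⧸ Q.submodule) = k - 1 ∧
    sSup (Set.range N) =
      sSup {m : ℕ | ∃ L : Submodule F (Fin k → F),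
        Q.submodule ≤ L ∧ Module.finrank F L = 2 ∧ m = MVal M L - M Q} := by
  haveI : Fintype (Projectivization F (Fin k → F)) := @Fintype.ofFinite _ (Quotient.finite _)
  haveI : Fintype (Projectivization F ((Fin k → F) ⧸ Q.submodule)) :=
    @Fintype.ofFinite _ (Quotient.finite _)
  set π := Q.submodule.mkQ with hπ
  -- dimension of quotient
  have hfrV : finrank F (Fin k → F) = k := Module.finrank_fin_fun F
  have hfrW : finrank F ((Fin k → F) ⧸ Q.submodule) = k - 1 := by
    have h := Submodule.finrank_quotient_add_finrank Q.submodule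
    rw [Q.finrank_submodule, hfrV] at h
    omega
  -- quotient is nontrivial, so its projectivization is nonempty
  haveI : Nontrivial ((Fin k → F) ⧸ Q.submodule) :=
    Module.nontrivial_of_finrank_pos (R := F) (by omega)
  -- the line corresponding to a point of the quotient
  set Lof : Projectivization F ((Fin k → F) ⧸ Q.submodule) → Submodule F (Fin k → F) :=
    fun P' => Submodule.comap π P'.submodule with hLof
  have hLQ : ∀ P', Q.submodule ≤ Lof P' := fun P' => Submodule.le_comap_mkQ _ _
  have hmapL : ∀ P', Submodule.map π (Lof P') = P'.submodule := fun P' =>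
    Submodule.map_comap_eq_of_surjective (Submodule.mkQ_surjective _) _
  have hfinL : ∀ P', finrank F (Lof P') = 2 := by
    intro P'
    have h := aux_finrank22259 Q (Lof P') (hLQ P')
    rw [← hπ, hmapL, P'.finrank_submodule] at h
    omega
  have hNval : ∀ P', N P' = MVal M (Lof P') - M Q := fun P' =>
    hN _ P' (hLQ P') (hfinL P') (hmapL P')
  -- projection map on points
  have hrepne : ∀ P : Projectivization F (Fin k → F), P ≠ Q → π P.rep ≠ 0 := by
    intro P hPQ h0
    have hmem : P.rep ∈ Q.submodule := by
      rw [← Submodule.ker_mkQ Q.submodule]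
      exact h0
    have hle : P.submodule ≤ Q.submodule := by
      rw [P.submodule_eq]
      exact (Submodule.span_singleton_le_iff_mem _ _).mpr hmem
    have heq := Submodule.eq_of_le_of_finrank_eq hle
      (by rw [P.finrank_submodule, Q.finrank_submodule])
    exact hPQ (Projectivization.submodule_injective heq)
  set proj : Projectivization F (Fin k → F) → Projectivization F ((Fin k → F) ⧸ Q.submodule) :=
    fun P => if h : P = Q then Classical.arbitrary _
      else Projectivization.mk F (π P.rep) (hrepne P h) with hproj
  have hproj_sub : ∀ (P : Projectivization F (Fin k → F)) (h : P ≠ Q),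
      (proj P).submodule = Submodule.span F {π P.rep} := by
    intro P h
    rw [hproj]
    simp only [dif_neg h]
    exact Projectivization.submodule_mk _ _
  -- membership of rep
  have hrep_mem : ∀ (P : Projectivization F (Fin k → F)) (K : Submodule F (Fin k → F)),
      P.submodule ≤ K → P.rep ∈ K := by
    intro P K hle
    exact hle (by rw [P.submodule_eq]; exact Submodule.mem_span_singleton_self _)
  have hle_of_rep : ∀ (P : Projectivization F (Fin k → F)) (K : Submodule F (Fin k → F)),
      P.rep ∈ K → P.submodule ≤ K := by
    intro P K hm
    rw [P.submodule_eq]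
    exact (Submodule.span_singleton_le_iff_mem _ _).mpr hm
  -- characterize fibers of proj
  have hfiber : ∀ (P : Projectivization F (Fin k → F)) (h : P ≠ Q)
      (P' : Projectivization F ((Fin k → F) ⧸ Q.submodule)),
      proj P = P' ↔ P.submodule ≤ Lof P' := by
    intro P h P'
    constructor
    · rintro rfl
      apply hle_of_rep
      rw [Submodule.mem_comap, hproj_sub P h]
      exact Submodule.mem_span_singleton_self _
    · intro hle
      apply Projectivization.submodule_injective
      rw [hproj_sub P h]
      have hmem : π P.rep ∈ P'.submodule := hrep_mem P _ hle
      apply Submodule.eq_of_le_of_finrank_eq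
      · exact (Submodule.span_singleton_le_iff_mem _ _).mpr hmem
      · rw [finrank_span_singleton (hrepne P h), P'.finrank_submodule]
  -- the key counting identity
  have key : ∀ K : Submodule F (Fin k → F), Q.submodule ≤ K →
      MVal N (Submodule.map π K) + M Q = MVal M K := by
    intro K hQK
    rw [MVal_eq_sum22259, MVal_eq_sum22259]
    set S : Finset (Projectivization F (Fin k → F)) :=
      Finset.univ.filter (fun P => P.submodule ≤ K ∧ P ≠ Q) with hS
    set S' : Finset (Projectivization F ((Fin k → F) ⧸ Q.submodule)) :=
      Finset.univ.filter (fun P' => P'.submodule ≤ Submodule.map π K) with hS'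
    have hmaps : ∀ P ∈ S, proj P ∈ S' := by
      intro P hP
      rw [hS, Finset.mem_filter] at hP
      obtain ⟨-, hPK, hPQ⟩ := hP
      rw [hS', Finset.mem_filter]
      refine ⟨Finset.mem_univ _, ?_⟩
      rw [hproj_sub P hPQ]
      apply (Submodule.span_singleton_le_iff_mem _ _).mpr
      exact Submodule.mem_map_of_mem (hrep_mem P K hPK)
    have hsplit : ∀ P' ∈ S', (Finset.univ.filter
          (fun P : Projectivization F (Fin k → F) => P.submodule ≤ Lof P'))
        = insert Q (S.filter (fun P => proj P = P')) := by
      intro P' hP'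
      rw [hS', Finset.mem_filter] at hP'
      have hLK : Lof P' ≤ K := by
        calc Lof P' ≤ Submodule.comap π (Submodule.map π K) :=
              Submodule.comap_mono hP'.2
        _ = K := by rw [hπ, Submodule.comap_map_mkQ, sup_eq_right.mpr hQK]
      ext P
      simp only [Finset.mem_filter, Finset.mem_insert, Finset.mem_univ, true_and, hS]
      constructor
      · intro hPL
        by_cases hPQ : P = Q
        · exact Or.inl hPQ
        · exact Or.inr ⟨⟨le_trans hPL hLK, hPQ⟩, (hfiber P hPQ P').mpr hPL⟩
      · rintro (rfl | ⟨⟨-, hPQ⟩, hp⟩)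
        · exact hLQ P'
        · exact (hfiber P hPQ P').mp hp
    have hinner : ∀ P' ∈ S', ∑ P ∈ S.filter (fun P => proj P = P'), M P = N P' := by
      intro P' hP'
      have hQnot : Q ∉ S.filter (fun P => proj P = P') := by
        simp [hS]
      have hs := hsplit P' hP'
      have hsum : MVal M (Lof P') = M Q + ∑ P ∈ S.filter (fun P => proj P = P'), M P := by
        rw [MVal_eq_sum22259, hs, Finset.sum_insert hQnot]
      rw [hNval P', hsum]
      omega
    have hfib := Finset.sum_fiberwise_of_maps_to hmaps M
    have h3 : ∑ P' ∈ S', N P' = ∑ P ∈ S, M P := by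
      rw [← hfib]
      exact Finset.sum_congr rfl fun x hx => (hinner x hx).symm
    have hQnotS : Q ∉ S := by simp [hS]
    have hKsplit : Finset.univ.filter
        (fun P : Projectivization F (Fin k → F) => P.submodule ≤ K) = insert Q S := by
      ext P
      simp only [Finset.mem_filter, Finset.mem_insert, Finset.mem_univ, true_and, hS]
      constructor
      · intro hPK
        by_cases hPQ : P = Q
        · exact Or.inl hPQ
        · exact Or.inr ⟨hPK, hPQ⟩
      · rintro (rfl | ⟨hPK, -⟩)
        · exact hQK
        · exact hPK
    rw [hKsplit, Finset.sum_insert hQnotS, h3]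
    omega
  have hmap_top : Submodule.map π (⊤ : Submodule F (Fin k → F)) = ⊤ := by
    rw [Submodule.map_top, hπ, Submodule.range_mkQ]
  have htop : MVal N ⊤ + M Q = MVal M ⊤ := by
    have h := key ⊤ le_top
    rwa [hmap_top] at h
  refine ⟨?_, ?_, ?_, hfrW, ?_⟩
  · -- divisibility
    intro H' hH'
    set K := Submodule.comap π H' with hK
    have hQK : Q.submodule ≤ K := Submodule.le_comap_mkQ _ _
    have hmapK : Submodule.map π K = H' :=
      Submodule.map_comap_eq_of_surjective (Submodule.mkQ_surjective _) _
    have hfrK : finrank F K + 1 = finrank F (Fin k → F) := by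
      have h1 := aux_finrank22259 Q K hQK
      rw [← hπ, hmapK] at h1
      rw [hfrW] at hH'
      rw [hfrV]
      omega
    have hmod := hdiv K hfrK
    have h2 := key K hQK
    rw [hmapK] at h2
    rw [← h2, ← htop] at hmod
    exact Nat.ModEq.add_right_cancel' _ hmod
  · omega
  · -- spanning
    rw [IsSpanning]
    apply top_unique
    have hle : (⨆ P ∈ {P : Projectivization F (Fin k → F) | 0 < M P},
          Submodule.map π P.submodule)
        ≤ ⨆ P' ∈ {P' : Projectivization F ((Fin k → F) ⧸ Q.submodule) | 0 < N P'},
            P'.submodule := by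
      refine iSup₂_le fun P hP => ?_
      by_cases hPQ : P = Q
      · subst hPQ
        rw [hπ, Submodule.mkQ_map_self]
        exact bot_le
      · have hmapP : Submodule.map π P.submodule = (proj P).submodule := by
          rw [P.submodule_eq, Submodule.map_span, Set.image_singleton, hproj_sub P hPQ]
        have hPle : P.submodule ≤ Lof (proj P) := (hfiber P hPQ _).mp rfl
        have hpos : 0 < N (proj P) := by
          have h1 := hNval (proj P)
          have h2 : M Q + M P ≤ MVal M (Lof (proj P)) := by
            rw [MVal_eq_sum22259]
            have hsub : ({Q, P} : Finset (Projectivization F (Fin k → F))) ⊆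
                Finset.univ.filter (fun R => R.submodule ≤ Lof (proj P)) := by
              intro R hR
              rw [Finset.mem_insert, Finset.mem_singleton] at hR
              rcases hR with rfl | rfl
              · simp [hLQ]
              · simp [hPle]
            calc M Q + M P
                = ∑ R ∈ ({Q, P} : Finset (Projectivization F (Fin k → F))), M R := by
                  rw [Finset.sum_pair (Ne.symm hPQ)]
            _ ≤ _ := Finset.sum_le_sum_of_subset hsub
          have h3 : 0 < M P := hP
          omega
        rw [hmapP]
        exact le_biSup Projectivization.submodule (show proj P ∈
          {P' : Projectivization F ((Fin k → F) ⧸ Q.submodule) | 0 < N P'} from hpos)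
    calc (⊤ : Submodule F ((Fin k → F) ⧸ Q.submodule)) = Submodule.map π ⊤ := hmap_top.symm
    _ = Submodule.map π (⨆ P ∈ {P : Projectivization F (Fin k → F) | 0 < M P},
          P.submodule) := by
        rw [hspan]
    _ = ⨆ P ∈ {P : Projectivization F (Fin k → F) | 0 < M P},
          Submodule.map π P.submodule := by
        simp_rw [Submodule.map_iSup]
    _ ≤ _ := hle
  · -- sSup equality
    congr 1
    ext m
    constructor
    · rintro ⟨P', rfl⟩
      exact ⟨Lof P', hLQ P', hfinL P', hNval P'⟩
    · rintro ⟨L, hQL, hL2, rfl⟩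
      have h1 : finrank F (Submodule.map π L) = 1 := by
        have h := aux_finrank22259 Q L hQL
        rw [← hπ, hL2] at h
        omega
      refine ⟨Projectivization.mk'' (Submodule.map π L) h1, ?_⟩
      exact hN L _ hQL hL2 (Projectivization.submodule_mk'' _ _).symm
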